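/- Let d ≥ 2 and r ≥ 1. There exists a constant C > 0 with the following property. For all g, m ∈ GL(d,ℝ) with ‖m‖ ≤ r and ‖m⁻¹‖ ≤ r, for every singular value decomposition g = k·diag(α)·k' of g, and for every singular value decomposition g·m = κ·diag(β)·κ'' of g·m, one has sin∠(k·e₁, κ·e₁) ≤ C · (α 1)/(α 0). -/

import Mathlib

open Matrix

/-- The operator norm of a `d × d` real matrix acting on Euclidean `ℝ^d`. -/
noncomputable def opNorm {d : ℕ} (M : Matrix (Fin d) (Fin d) ℝ) : ℝ :=
  ‖LinearMap.toContinuousLinearMap (Matrix.toEuclideanLin M)‖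

/-- The action of a `d × d` real matrix on Euclidean `ℝ^d`. -/
noncomputable def appE {d : ℕ} (M : Matrix (Fin d) (Fin d) ℝ)
    (v : EuclideanSpace ℝ (Fin d)) : EuclideanSpace ℝ (Fin d) :=
  Matrix.toEuclideanLin M v

/-- `IsSVD g k α k'` means `g = k · diag(α) · k'` is a singular value decomposition:
`k, k'` are orthogonal and `α` is positive and nonincreasing. -/
def IsSVD {d : ℕ} (g k : Matrix (Fin d) (Fin d) ℝ) (α : Fin d → ℝ)
    (k' : Matrix (Fin d) (Fin d) ℝ) : Prop :=
  k * kᵀ = 1 ∧ k' * k'ᵀ = 1 ∧ (∀ i, 0 < α i) ∧ Antitone α ∧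
    g = k * Matrix.diagonal α * k'

/-- The sine of the angle between two vectors of Euclidean `ℝ^d`. -/
noncomputable def sinAngle {d : ℕ} (u v : EuclideanSpace ℝ (Fin d)) : ℝ :=
  Real.sin (InnerProductGeometry.angle u v)

/-- The first standard basis vector of Euclidean `ℝ^d`. -/
noncomputable def e1 {d : ℕ} (h : 0 < d) : EuclideanSpace ℝ (Fin d) :=
  EuclideanSpace.single ⟨0, h⟩ 1

section Aux

open scoped RealInnerProductSpace

variable {d : ℕ}

lemma appE_apply (M : Matrix (Fin d) (Fin d) ℝ) (v : EuclideanSpace ℝ (Fin d)) (i : Fin d) :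
    appE M v i = M.mulVec (fun j => v j) i := rfl

lemma appE_mul (M N : Matrix (Fin d) (Fin d) ℝ) (v : EuclideanSpace ℝ (Fin d)) :
    appE (M * N) v = appE M (appE N v) := by
  ext i
  simp [appE_apply, Matrix.mulVec_mulVec]

lemma appE_one (v : EuclideanSpace ℝ (Fin d)) : appE 1 v = v := by
  ext i
  simp [appE_apply]

lemma appE_smul (M : Matrix (Fin d) (Fin d) ℝ) (c : ℝ) (v : EuclideanSpace ℝ (Fin d)) :
    appE M (c • v) = c • appE M v := by
  simp [appE]

lemma inner_appE (M : Matrix (Fin d) (Fin d) ℝ) (a b : EuclideanSpace ℝ (Fin d)) :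
    ⟪appE M a, b⟫ = ⟪a, appE Mᵀ b⟫ := by
  simp only [PiLp.inner_apply, RCLike.inner_apply, starRingEnd_apply, star_trivial,
    appE_apply]
  have h1 : ∑ i, b i * M.mulVec (fun j => a j) i
      = dotProduct (M.mulVec (fun j => a j)) (fun i => b i) := by rw [dotProduct_comm]; rfl
  have h2 : ∑ i, Mᵀ.mulVec (fun j => b j) i * a i
      = dotProduct (fun i => a i) (Mᵀ.mulVec (fun j => b j)) := by rw [dotProduct_comm]; rfl
  rw [h1, h2, Matrix.mulVec_transpose, dotProduct_comm, Matrix.dotProduct_mulVec]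
  exact dotProduct_comm _ _

lemma inner_appE_orth {k : Matrix (Fin d) (Fin d) ℝ} (hk : k * kᵀ = 1)
    (a b : EuclideanSpace ℝ (Fin d)) : ⟪appE k a, appE k b⟫ = ⟪a, b⟫ := by
  rw [inner_appE, ← appE_mul, mul_eq_one_comm.mp hk, appE_one]

lemma norm_appE_orth {k : Matrix (Fin d) (Fin d) ℝ} (hk : k * kᵀ = 1)
    (a : EuclideanSpace ℝ (Fin d)) : ‖appE k a‖ = ‖a‖ := by
  rw [← mul_self_inj_of_nonneg (norm_nonneg _) (norm_nonneg _),
    ← real_inner_self_eq_norm_mul_norm, ← real_inner_self_eq_norm_mul_norm,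
    inner_appE_orth hk]

lemma angle_appE_orth {k : Matrix (Fin d) (Fin d) ℝ} (hk : k * kᵀ = 1)
    (a b : EuclideanSpace ℝ (Fin d)) :
    InnerProductGeometry.angle (appE k a) (appE k b) = InnerProductGeometry.angle a b := by
  unfold InnerProductGeometry.angle
  rw [inner_appE_orth hk, norm_appE_orth hk, norm_appE_orth hk]

lemma norm_appE_le (M : Matrix (Fin d) (Fin d) ℝ) (v : EuclideanSpace ℝ (Fin d)) :
    ‖appE M v‖ ≤ opNorm M * ‖v‖ :=
  (LinearMap.toContinuousLinearMap (Matrix.toEuclideanLin M)).le_opNorm v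

lemma appE_diagonal_apply (β : Fin d → ℝ) (v : EuclideanSpace ℝ (Fin d)) (i : Fin d) :
    appE (Matrix.diagonal β) v i = β i * v i := by
  rw [appE_apply, Matrix.mulVec_diagonal]

lemma norm_appE_diagonal_le {β : Fin d → ℝ} {c : ℝ} (hc : 0 ≤ c) (hβ : ∀ i, |β i| ≤ c)
    (v : EuclideanSpace ℝ (Fin d)) : ‖appE (Matrix.diagonal β) v‖ ≤ c * ‖v‖ := by
  have hsq : ⟪appE (Matrix.diagonal β) v, appE (Matrix.diagonal β) v⟫ ≤ (c * ‖v‖) * (c * ‖v‖) := by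
    have h2 : (c * ‖v‖) * (c * ‖v‖) = c ^ 2 * ⟪v, v⟫ := by
      rw [real_inner_self_eq_norm_mul_norm]; ring
    rw [h2]
    simp only [PiLp.inner_apply, RCLike.inner_apply, starRingEnd_apply, star_trivial,
      appE_diagonal_apply, Finset.mul_sum]
    apply Finset.sum_le_sum
    intro i _
    have h := hβ i
    have h2 := abs_nonneg (β i)
    have h3 : β i ^ 2 ≤ c ^ 2 := by nlinarith [sq_abs (β i)]
    nlinarith [mul_nonneg (sub_nonneg.mpr h3) (mul_self_nonneg (v i))]
  rw [real_inner_self_eq_norm_mul_norm] at hsq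
  nlinarith [norm_nonneg (appE (Matrix.diagonal β) v), norm_nonneg v, mul_nonneg hc (norm_nonneg v)]

end Aux

set_option maxHeartbeats 2000000 in
/-- Uniformly over `m` in a compact part of `GL(d,ℝ)`, the attracting line `Ξ(g·m)` of an
SVD of `g·m` is at sine-distance at most `C · (α 1)/(α 0)` from the attracting line `Ξ(g)`. -/
theorem stmt4 (d : ℕ) (hd : 2 ≤ d) (r : ℝ) (hr : 1 ≤ r) :
    ∃ C : ℝ, 0 < C ∧
      ∀ g m : Matrix (Fin d) (Fin d) ℝ, IsUnit g.det → IsUnit m.det →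
        opNorm m ≤ r → opNorm m⁻¹ ≤ r →
        ∀ (k : Matrix (Fin d) (Fin d) ℝ) (α : Fin d → ℝ)
          (k' : Matrix (Fin d) (Fin d) ℝ), IsSVD g k α k' →
        ∀ (κ : Matrix (Fin d) (Fin d) ℝ) (β : Fin d → ℝ)
          (κ'' : Matrix (Fin d) (Fin d) ℝ), IsSVD (g * m) κ β κ'' →
          sinAngle (appE k (e1 (by omega))) (appE κ (e1 (by omega)))
            ≤ C * (α ⟨1, by omega⟩ / α ⟨0, by omega⟩) := by
  classical
  have h0 : 0 < d := by omega
  set i0 : Fin d := ⟨0, by omega⟩ with hi0def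
  set i1 : Fin d := ⟨1, by omega⟩ with hi1def
  refine ⟨r ^ 2, by positivity, ?_⟩
  rintro g m hg hm hmr hminvr k α k' ⟨hk, hk', hαpos, hαanti, hgdef⟩
    κ β γ'' ⟨hκ, hκ'', hβpos, hβanti, hgm⟩
  -- basic notation
  set E : EuclideanSpace ℝ (Fin d) := e1 h0 with hE
  have hEnorm : ‖E‖ = 1 := by
    rw [hE]; simpa [e1] using EuclideanSpace.norm_single (𝕜 := ℝ) i0 1
  set x : EuclideanSpace ℝ (Fin d) := appE γ''ᵀ E with hx
  set y : EuclideanSpace ℝ (Fin d) := appE k' (appE m x) with hy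
  set z : EuclideanSpace ℝ (Fin d) := appE (Matrix.diagonal α) y with hz
  clear_value z y x E
  have hγ''T : γ''ᵀ * γ''ᵀᵀ = 1 := by
    rw [Matrix.transpose_transpose]; exact mul_eq_one_comm.mp hκ''
  have hxnorm : ‖x‖ = 1 := by rw [hx, norm_appE_orth hγ''T, hEnorm]
  have hγ''x : appE γ'' x = E := by
    rw [hx, ← appE_mul, hκ'', appE_one]
  -- diagonal acting on E
  have hdiagE : ∀ (δ : Fin d → ℝ), appE (Matrix.diagonal δ) E = δ i0 • E := by
    intro δ
    ext i
    rw [appE_diagonal_apply]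
    by_cases hi : i = i0
    · subst hi; simp [hE, e1, EuclideanSpace.single_apply, hi0def]
    · have hi' : (i : ℕ) ≠ 0 := fun h => hi (Fin.ext (by simp [h, hi0def]))
      simp [hE, e1, EuclideanSpace.single_apply, hi0def, hi, Fin.ext_iff, hi']
  -- (D) : appE (g*m) x = appE k z
  have hD : appE (g * m) x = appE k z := by
    rw [hgdef, hz, hy]
    rw [show k * Matrix.diagonal α * k' * m = k * (Matrix.diagonal α * (k' * m)) by
        rw [Matrix.mul_assoc, Matrix.mul_assoc],
      appE_mul, appE_mul, appE_mul]
  -- (E') : appE (g*m) x = β i0 • appE κ E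
  have hE' : appE (g * m) x = β i0 • appE κ E := by
    rw [hgm, appE_mul, appE_mul, hγ''x, hdiagE β, appE_smul]
  have hkzE : appE k z = β i0 • appE κ E := by rw [← hD, hE']
  -- norm of z
  have hκEnorm : ‖appE κ E‖ = 1 := by rw [norm_appE_orth hκ, hEnorm]
  have hznorm : ‖z‖ = β i0 := by
    rw [← norm_appE_orth hk z, hkzE, norm_smul, hκEnorm, Real.norm_eq_abs,
      abs_of_pos (hβpos i0), mul_one]
  -- norm of y
  have hynorm : ‖y‖ ≤ r := by
    rw [hy, norm_appE_orth hk']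
    calc ‖appE m x‖ ≤ opNorm m * ‖x‖ := norm_appE_le m x
    _ ≤ r := by rw [hxnorm, mul_one]; exact hmr
  -- lower bound on β i0 : α i0 ≤ β i0 * r
  have hgmle : ∀ u : EuclideanSpace ℝ (Fin d), ‖appE (g * m) u‖ ≤ β i0 * ‖u‖ := by
    intro u
    rw [hgm, appE_mul, appE_mul, norm_appE_orth hκ]
    calc ‖appE (Matrix.diagonal β) (appE γ'' u)‖
        ≤ β i0 * ‖appE γ'' u‖ := by
          refine norm_appE_diagonal_le (le_of_lt (hβpos i0)) (fun i => ?_) _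
          rw [abs_of_pos (hβpos i)]
          exact hβanti (by simp [hi0def, Fin.le_def])
      _ = β i0 * ‖u‖ := by rw [norm_appE_orth hκ'']
  have hβ0r : α i0 ≤ β i0 * r := by
    set w : EuclideanSpace ℝ (Fin d) := appE k'ᵀ E with hw
    clear_value w
    have hk'T : k'ᵀ * k'ᵀᵀ = 1 := by
      rw [Matrix.transpose_transpose]; exact mul_eq_one_comm.mp hk'
    have hwnorm : ‖w‖ = 1 := by rw [hw, norm_appE_orth hk'T, hEnorm]
    have hk'w : appE k' w = E := by rw [hw, ← appE_mul, hk', appE_one]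
    have hgw : ‖appE g w‖ = α i0 := by
      rw [hgdef, appE_mul, appE_mul, hk'w, hdiagE α,
        appE_smul, norm_smul, norm_appE_orth hk, hEnorm, Real.norm_eq_abs,
        abs_of_pos (hαpos i0), mul_one]
    have hgsplit : appE g w = appE (g * m) (appE m⁻¹ w) := by
      conv_rhs => rw [← appE_mul]
      rw [Matrix.mul_assoc, Matrix.mul_nonsing_inv m hm, Matrix.mul_one]
    have hminv : ‖appE m⁻¹ w‖ ≤ r := by
      calc ‖appE m⁻¹ w‖ ≤ opNorm m⁻¹ * ‖w‖ := norm_appE_le _ _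
      _ ≤ r := by rw [hwnorm, mul_one]; exact hminvr
    calc α i0 = ‖appE g w‖ := hgw.symm
      _ = ‖appE (g * m) (appE m⁻¹ w)‖ := by rw [hgsplit]
      _ ≤ β i0 * ‖appE m⁻¹ w‖ := hgmle _
      _ ≤ β i0 * r := by
          exact mul_le_mul_of_nonneg_left hminv (le_of_lt (hβpos i0))
  -- the angle identity
  have hangle : InnerProductGeometry.angle (appE k E) (appE κ E)
      = InnerProductGeometry.angle E z := by
    rw [← InnerProductGeometry.angle_smul_right_of_pos (appE k E) (appE κ E) (hβpos i0),
      ← hkzE, angle_appE_orth hk]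
  -- the sine bound
  have hsin : Real.sin (InnerProductGeometry.angle E z) * ‖z‖ ≤ α i1 * ‖y‖ := by
    have key := InnerProductGeometry.sin_angle_mul_norm_mul_norm E z
    rw [hEnorm, one_mul] at key
    rw [key]
    have hinnerEE : (inner ℝ E E) = 1 := by
      rw [real_inner_self_eq_norm_mul_norm, hEnorm, mul_one]
    have hinnerEz : (inner ℝ E z) = z i0 := by
      rw [hE]
      simp only [e1, hi0def]
      simpa using EuclideanSpace.inner_single_left (𝕜 := ℝ) ⟨0, h0⟩ 1 z
    rw [hinnerEE, hinnerEz, one_mul]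
    have hzz : (inner ℝ z z) = ∑ i, z i * z i := by
      simp only [PiLp.inner_apply, RCLike.inner_apply, starRingEnd_apply, star_trivial]
    have hsum : (inner ℝ z z) - z i0 * z i0 = ∑ i ∈ Finset.univ.erase i0, z i * z i := by
      rw [hzz, ← Finset.add_sum_erase _ _ (Finset.mem_univ i0)]; ring
    rw [hsum]
    have hyy : ∑ i ∈ Finset.univ.erase i0, z i * z i ≤ (α i1 * ‖y‖) * (α i1 * ‖y‖) := by
      have h2 : (α i1 * ‖y‖) * (α i1 * ‖y‖) = ∑ i, (α i1) ^ 2 * (y i * y i) := by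
        rw [show (α i1 * ‖y‖) * (α i1 * ‖y‖) = (α i1) ^ 2 * (‖y‖ * ‖y‖) by ring,
          ← real_inner_self_eq_norm_mul_norm]
        simp only [PiLp.inner_apply, RCLike.inner_apply, starRingEnd_apply, star_trivial,
          Finset.mul_sum]
      rw [h2]
      calc ∑ i ∈ Finset.univ.erase i0, z i * z i
          ≤ ∑ i ∈ Finset.univ.erase i0, (α i1) ^ 2 * (y i * y i) := by
            apply Finset.sum_le_sum
            intro i hi
            have hine : i ≠ i0 := Finset.ne_of_mem_erase hi
            have hile : α i ≤ α i1 := by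
              apply hαanti
              rw [hi1def, Fin.le_def]
              simp only []
              have : i.val ≠ 0 := fun hc => hine (Fin.ext (by simp [hc, hi0def]))
              omega
            have hzi : z i = α i * y i := by rw [hz, appE_diagonal_apply]
            rw [hzi]
            have hα := hαpos i
            have hsq : α i * α i ≤ α i1 * α i1 :=
              mul_le_mul hile hile (le_of_lt hα) (le_of_lt (hαpos i1))
            have hpr := mul_nonneg (sub_nonneg.mpr hsq) (mul_self_nonneg (y i))
            nlinarith [hpr]
        _ ≤ ∑ i, (α i1) ^ 2 * (y i * y i) := by
            refine Finset.sum_le_sum_of_subset_of_nonneg (Finset.erase_subset _ _) ?_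
            intro i _ _
            have := mul_self_nonneg (y i)
            positivity
    calc Real.sqrt (∑ i ∈ Finset.univ.erase i0, z i * z i)
        ≤ Real.sqrt ((α i1 * ‖y‖) * (α i1 * ‖y‖)) := Real.sqrt_le_sqrt hyy
      _ = α i1 * ‖y‖ := Real.sqrt_mul_self (mul_nonneg (le_of_lt (hαpos i1)) (norm_nonneg _))
  -- putting things together
  have hβ0pos := hβpos i0
  have hα0pos := hαpos i0
  have hα1pos := hαpos i1
  have hrpos : (0:ℝ) < r := lt_of_lt_of_le one_pos hr
  have hsin2 : sinAngle (appE k E) (appE κ E) ≤ α i1 * r / β i0 := by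
    rw [sinAngle, hangle, le_div_iff₀ hβ0pos]
    calc Real.sin (InnerProductGeometry.angle E z) * β i0
        = Real.sin (InnerProductGeometry.angle E z) * ‖z‖ := by rw [hznorm]
      _ ≤ α i1 * ‖y‖ := hsin
      _ ≤ α i1 * r := mul_le_mul_of_nonneg_left hynorm (le_of_lt hα1pos)
  refine le_trans hsin2 ?_
  show α i1 * r / β i0 ≤ r ^ 2 * (α i1 / α i0)
  rw [show r ^ 2 * (α i1 / α i0) = r ^ 2 * α i1 / α i0 from (mul_div_assoc _ _ _).symm,
    div_le_div_iff₀ hβ0pos hα0pos]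
  nlinarith [mul_le_mul_of_nonneg_left hβ0r (mul_nonneg (le_of_lt hα1pos) (le_of_lt hrpos))]
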